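/- Assume M := h_1(1+m) > 1 and set q := (1+m−M)/m with 0 < q < 1, m̂ := h_0/h_1 and m̃ := M−1. Then for all s, t ∈ [0,1] the skeleton joint generating function F(s,t) := (f(s(1−q)+tq) − f(tq))/(1−q) factorizes as F(s,t) = s · 1/(1+m − m̃ s − (m−m̃) t) · 1/(1+m̂ − m̂ t) = s/(1+m−m(s(1−q)+tq)) · 1/(1+m̂−m̂t); consequently f̄(s) := F(s,s) = s/(1+m−ms) · 1/(1+m̂−m̂s) and the derivative of f̄ at s = 1 equals 1+m+m̂ = M + (M+1)m̂. -/

import Mathlib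

lemma lf_key (h0 m q s t : ℝ) (hh1 : (1:ℝ) - h0 ≠ 0) (hm : m ≠ 0)
    (hqe : q = h0*(1+m)/m)
    (hq1 : (1:ℝ) - q ≠ 0)
    (hA : 1 + m - m * (s * (1 - q) + t * q) ≠ 0)
    (hB : 1 + m - m * (t * q) ≠ 0)
    (hC : 1 + h0 / (1 - h0) - h0 / (1 - h0) * t ≠ 0) :
    ((h0 + (1 - h0) * (s * (1 - q) + t * q) / (1 + m - m * (s * (1 - q) + t * q)))
      - (h0 + (1 - h0) * (t * q) / (1 + m - m * (t * q)))) / (1 - q)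
    = s / (1 + m - m * (s * (1 - q) + t * q))
      * (1 / (1 + h0 / (1 - h0) - h0 / (1 - h0) * t)) := by
  have hB2 : 1 + m - m * (t * q) = (1 + m) * (1 - h0 * t) := by rw [hqe]; field_simp
  have hC' : 1 + h0 / (1 - h0) - h0 / (1 - h0) * t = (1 - h0 * t) / (1 - h0) := by
    field_simp; ring
  have h1m : 1 + m ≠ 0 := left_ne_zero_of_mul (hB2 ▸ hB)
  have h1t : 1 - h0 * t ≠ 0 := right_ne_zero_of_mul (hB2 ▸ hB)
  rw [hB2, hC']
  generalize hAd : 1 + m - m * (s * (1 - q) + t * q) = A at hA ⊢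
  generalize hQd : 1 - q = Q at hq1 ⊢
  field_simp
  rw [← hAd, ← hQd]
  rw [hqe]
  field_simp
  ring

theorem linear_fractional_skeleton_factorization
    (h0 m : ℝ) (hh00 : 0 < h0) (hh01 : h0 < 1) (hm : 0 < m)
    (f : ℝ → ℝ) (hf : ∀ s, f s = h0 + (1 - h0) * s / (1 + m - m * s))
    (hM : 1 < (1 - h0) * (1 + m))
    (q : ℝ) (hq : q = (1 + m - (1 - h0) * (1 + m)) / m) (hq0 : 0 < q) (hq1 : q < 1) :
    (∀ s ∈ Set.Icc (0:ℝ) 1, ∀ t ∈ Set.Icc (0:ℝ) 1,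
        (f (s * (1 - q) + t * q) - f (t * q)) / (1 - q)
            = s * (1 / (1 + m - ((1 - h0) * (1 + m) - 1) * s
                  - (m - ((1 - h0) * (1 + m) - 1)) * t))
              * (1 / (1 + h0 / (1 - h0) - h0 / (1 - h0) * t))
        ∧ (f (s * (1 - q) + t * q) - f (t * q)) / (1 - q)
            = s / (1 + m - m * (s * (1 - q) + t * q))
              * (1 / (1 + h0 / (1 - h0) - h0 / (1 - h0) * t)))
    ∧ (∀ s ∈ Set.Icc (0:ℝ) 1,
        (f (s * (1 - q) + s * q) - f (s * q)) / (1 - q)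
          = s / (1 + m - m * s) * (1 / (1 + h0 / (1 - h0) - h0 / (1 - h0) * s)))
    ∧ HasDerivAt (fun s : ℝ => (f (s * (1 - q) + s * q) - f (s * q)) / (1 - q))
        (1 + m + h0 / (1 - h0)) 1
    ∧ 1 + m + h0 / (1 - h0)
        = (1 - h0) * (1 + m) + ((1 - h0) * (1 + m) + 1) * (h0 / (1 - h0)) := by
  have h1pos : (0:ℝ) < 1 - h0 := by linarith
  have hh1 : (1:ℝ) - h0 ≠ 0 := h1pos.ne'
  have hqe : q = h0 * (1 + m) / m := by rw [hq]; ring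
  have hq1ne : (1:ℝ) - q ≠ 0 := by
    have : (0:ℝ) < 1 - q := by linarith
    exact this.ne'
  have hcnn : (0:ℝ) ≤ h0 / (1 - h0) := by positivity
  -- helper: positivity of denominators for x ∈ [0,1]
  have hden : ∀ x : ℝ, 0 ≤ x → x ≤ 1 → 0 < 1 + m - m * x := by
    intro x hx0 hx1
    nlinarith [mul_le_of_le_one_right hm.le hx1]
  have hCpos : ∀ t : ℝ, 0 ≤ t → t ≤ 1 →
      0 < 1 + h0 / (1 - h0) - h0 / (1 - h0) * t := by
    intro t ht0 ht1
    nlinarith [mul_le_of_le_one_right hcnn ht1]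
  have key : ∀ s ∈ Set.Icc (0:ℝ) 1, ∀ t ∈ Set.Icc (0:ℝ) 1,
      (f (s * (1 - q) + t * q) - f (t * q)) / (1 - q)
        = s / (1 + m - m * (s * (1 - q) + t * q))
          * (1 / (1 + h0 / (1 - h0) - h0 / (1 - h0) * t)) := by
    intro s hs t ht
    obtain ⟨hs0, hs1⟩ := hs
    obtain ⟨ht0, ht1⟩ := ht
    have hx0 : 0 ≤ s * (1 - q) + t * q := by
      have := mul_nonneg hs0 (by linarith : (0:ℝ) ≤ 1 - q)
      have := mul_nonneg ht0 hq0.le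
      linarith
    have hx1 : s * (1 - q) + t * q ≤ 1 := by
      have h1 := mul_le_of_le_one_left (by linarith : (0:ℝ) ≤ 1 - q) hs1
      have h2 := mul_le_of_le_one_left hq0.le ht1
      linarith
    have hy0 : 0 ≤ t * q := mul_nonneg ht0 hq0.le
    have hy1 : t * q ≤ 1 := by
      have := mul_le_of_le_one_left hq0.le ht1
      linarith
    have hA := (hden _ hx0 hx1).ne'
    have hB := (hden _ hy0 hy1).ne'
    have hC := (hCpos t ht0 ht1).ne'
    rw [hf, hf]
    exact lf_key h0 m q s t hh1 hm.ne' hqe hq1ne hA hB hC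
  refine ⟨?_, ?_, ?_, ?_⟩
  · intro s hs t ht
    have h2 := key s hs t ht
    have hdeq : 1 + m - ((1 - h0) * (1 + m) - 1) * s
        - (m - ((1 - h0) * (1 + m) - 1)) * t
        = 1 + m - m * (s * (1 - q) + t * q) := by
      rw [hqe]; field_simp; ring
    constructor
    · rw [h2, hdeq]; ring
    · exact h2
  · intro s hs
    have h2 := key s hs s hs
    rw [show s * (1 - q) + s * q = s from by ring] at h2 ⊢
    exact h2
  · -- derivative at 1
    set c := h0 / (1 - h0) with hc
    have hu1 : (1:ℝ) < min ((1 + m) / m) (1 / h0) := by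
      refine lt_min ?_ ?_
      · rw [lt_div_iff₀ hm]; linarith
      · rw [lt_div_iff₀ hh00]; linarith
    have hmem : Set.Ioo (0:ℝ) (min ((1 + m) / m) (1 / h0)) ∈ nhds (1:ℝ) :=
      Ioo_mem_nhds one_pos hu1
    have heq : (fun s : ℝ => (f (s * (1 - q) + s * q) - f (s * q)) / (1 - q))
        =ᶠ[nhds (1:ℝ)] fun s : ℝ => s / (1 + m - m * s) * (1 / (1 + c - c * s)) := by
      filter_upwards [hmem] with x hx
      obtain ⟨hx0, hxu⟩ := hx
      have hxm : x < (1 + m) / m := lt_of_lt_of_le hxu (min_le_left _ _)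
      have hxh : x < 1 / h0 := lt_of_lt_of_le hxu (min_le_right _ _)
      have hA : (0:ℝ) < 1 + m - m * x := by
        have := (lt_div_iff₀ hm).mp hxm
        nlinarith
      have hB : (0:ℝ) < 1 + m - m * (x * q) := by
        nlinarith [mul_pos hm hx0]
      have hC : (0:ℝ) < 1 + c - c * x := by
        have hx1 : h0 * x < 1 := by
          have := (lt_div_iff₀ hh00).mp hxh
          nlinarith
        have : 1 + c - c * x = (1 - h0 * x) / (1 - h0) := by
          rw [hc]; field_simp; ring
        rw [this]
        exact div_pos (by linarith) h1pos
      have h2 := lf_key h0 m q x x hh1 hm.ne' hqe hq1ne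
        (by rw [show x * (1 - q) + x * q = x from by ring]; exact hA.ne')
        hB.ne' hC.ne'
      rw [show x * (1 - q) + x * q = x from by ring] at h2
      rw [hf, hf, show x * (1 - q) + x * q = x from by ring, hc]
      exact h2
    have hne1 : (1:ℝ) + m - m * 1 ≠ 0 := by norm_num
    have hne2 : (1:ℝ) + c - c * 1 ≠ 0 := by
      rw [show (1:ℝ) + c - c * 1 = 1 from by ring]; norm_num
    have d1 : HasDerivAt (fun s : ℝ => 1 + m - m * s) (-m) 1 := by
      simpa using ((hasDerivAt_id (1:ℝ)).const_mul m).const_sub (1 + m)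
    have d2 : HasDerivAt (fun s : ℝ => 1 + c - c * s) (-c) 1 := by
      simpa using ((hasDerivAt_id (1:ℝ)).const_mul c).const_sub (1 + c)
    have hnum : HasDerivAt (fun s : ℝ => s / (1 + m - m * s)) (1 + m) 1 := by
      have := (hasDerivAt_id (1:ℝ)).div d1 hne1
      refine this.congr_deriv ?_
      norm_num
    have hinv : HasDerivAt (fun s : ℝ => 1 / (1 + c - c * s)) c 1 := by
      have := (hasDerivAt_const (1:ℝ) (1:ℝ)).div d2 hne2
      refine this.congr_deriv ?_
      rw [show (1:ℝ) + c - c * 1 = 1 from by ring]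
      norm_num
    have hg : HasDerivAt (fun s : ℝ => s / (1 + m - m * s) * (1 / (1 + c - c * s)))
        (1 + m + c) 1 := by
      have := hnum.mul hinv
      refine this.congr_deriv ?_
      rw [show (1:ℝ) + c - c * 1 = 1 from by ring,
        show (1:ℝ) + m - m * 1 = 1 from by ring]
      norm_num
    exact hg.congr_of_eventuallyEq heq
  · field_simp
    ring
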